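/- Let 0 < a < b and define g : (a,b) → ℝ by g(r) = Σ_{m=1}^∞ ((−1)^m + 1)·(r^{2m} − (ab)^{2m} r^{−2m})/(b^{2m} − a^{2m}). Then the series converges for every r ∈ (a,b), g is strictly increasing on (a,b), g(r) → −∞ as r → a⁺, g(r) → +∞ as r → b⁻, and g(r) = 0 if and only if r = √(ab). -/

import Mathlib

open Filter

/-- The function `g(r) = Σ_{m≥1} ((-1)^m + 1)(r^{2m} - (ab)^{2m} r^{-2m})/(b^{2m} - a^{2m})`. -/
noncomputable def gFun (a b r : ℝ) : ℝ :=
  ∑' m : ℕ, ((-1 : ℝ) ^ (m + 1) + 1) *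
    (r ^ (2 * (m + 1)) - (a * b) ^ (2 * (m + 1)) * (r ^ (2 * (m + 1)))⁻¹) /
    (b ^ (2 * (m + 1)) - a ^ (2 * (m + 1)))

namespace GAux

noncomputable def t (a b r : ℝ) (m : ℕ) : ℝ :=
  ((-1 : ℝ) ^ (m + 1) + 1) *
    (r ^ (2 * (m + 1)) - (a * b) ^ (2 * (m + 1)) * (r ^ (2 * (m + 1)))⁻¹) /
    (b ^ (2 * (m + 1)) - a ^ (2 * (m + 1)))

lemma gFun_eq (a b r : ℝ) : gFun a b r = ∑' m, t a b r m := rfl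

lemma c_cases (m : ℕ) : ((-1 : ℝ) ^ (m + 1) + 1) = 0 ∨ ((-1 : ℝ) ^ (m + 1) + 1) = 2 := by
  rcases Nat.even_or_odd (m + 1) with h | h
  · right; rw [h.neg_one_pow]; norm_num
  · left; rw [h.neg_one_pow]; norm_num

lemma c_nonneg (m : ℕ) : 0 ≤ ((-1 : ℝ) ^ (m + 1) + 1) := by
  rcases c_cases m with h | h <;> rw [h] <;> norm_num

lemma c_abs_le (m : ℕ) : |((-1 : ℝ) ^ (m + 1) + 1)| ≤ 2 := by
  rcases c_cases m with h | h <;> rw [h] <;> norm_num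

variable {a b : ℝ}

lemma denom_pos (ha : 0 < a) (hab : a < b) (m : ℕ) :
    0 < b ^ (2 * (m + 1)) - a ^ (2 * (m + 1)) :=
  sub_pos.2 (pow_lt_pow_left₀ hab ha.le (by omega))

lemma t_summable (ha : 0 < a) (hab : a < b) {r : ℝ} (hr : r ∈ Set.Ioo a b) :
    Summable (t a b r) := by
  have hb : 0 < b := ha.trans hab
  have hrpos : 0 < r := ha.trans hr.1
  set q1 : ℝ := (r / b) ^ 2 with hq1def
  set q2 : ℝ := (a / r) ^ 2 with hq2def
  have hq1 : q1 < 1 := by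
    rw [hq1def]; rw [show (1:ℝ) = 1 ^ 2 by norm_num]
    exact pow_lt_pow_left₀ (by rw [div_lt_one hb]; exact hr.2) (by positivity) (by norm_num)
  have hq2 : q2 < 1 := by
    rw [hq2def]; rw [show (1:ℝ) = 1 ^ 2 by norm_num]
    exact pow_lt_pow_left₀ (by rw [div_lt_one hrpos]; exact hr.1) (by positivity) (by norm_num)
  set C : ℝ := 2 * b ^ 2 / (b ^ 2 - a ^ 2) with hCdef
  have hba : 0 < b ^ 2 - a ^ 2 := by nlinarith
  have key : ∀ m, |t a b r m| ≤ C * (q1 ^ (m + 1) + q2 ^ (m + 1)) := by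
    intro m
    have hrN : 0 < r ^ (2 * (m + 1)) := pow_pos hrpos _
    have hbN : 0 < b ^ (2 * (m + 1)) := pow_pos hb _
    have hDpos := denom_pos ha hab m
    have hD2 : b ^ (2 * m) * (b ^ 2 - a ^ 2) ≤ b ^ (2 * (m + 1)) - a ^ (2 * (m + 1)) := by
      have h1 : a ^ (2 * (m + 1)) ≤ b ^ (2 * m) * a ^ 2 := by
        rw [show 2 * (m + 1) = 2 * m + 2 by ring, pow_add]
        exact mul_le_mul_of_nonneg_right (pow_le_pow_left₀ ha.le hab.le _) (by positivity)
      have h2 : b ^ (2 * (m + 1)) = b ^ (2 * m) * b ^ 2 := by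
        rw [show 2 * (m + 1) = 2 * m + 2 by ring, pow_add]
      nlinarith
    have habs : |t a b r m| ≤ 2 * (r ^ (2 * (m + 1)) + (a * b) ^ (2 * (m + 1)) * (r ^ (2 * (m + 1)))⁻¹)
        / (b ^ (2 * m) * (b ^ 2 - a ^ 2)) := by
      rw [t, abs_div, abs_mul, abs_of_pos hDpos]
      apply div_le_div₀ (by positivity) _ (by positivity) hD2
      apply mul_le_mul (c_abs_le m) _ (abs_nonneg _) (by norm_num)
      calc |r ^ (2 * (m + 1)) - (a * b) ^ (2 * (m + 1)) * (r ^ (2 * (m + 1)))⁻¹|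
          ≤ |r ^ (2 * (m + 1))| + |(a * b) ^ (2 * (m + 1)) * (r ^ (2 * (m + 1)))⁻¹| := abs_sub _ _
        _ = r ^ (2 * (m + 1)) + (a * b) ^ (2 * (m + 1)) * (r ^ (2 * (m + 1)))⁻¹ := by
            rw [abs_of_pos hrN, abs_of_pos (by positivity)]
    refine habs.trans (le_of_eq ?_)
    have hbne : b ≠ 0 := hb.ne'
    have hrne : r ≠ 0 := hrpos.ne'
    have hbane : b ^ 2 - a ^ 2 ≠ 0 := hba.ne'
    rw [hq1def, hq2def, hCdef]
    simp only [div_pow, ← pow_mul, mul_pow]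
    field_simp
    ring
  have hsum : Summable fun m : ℕ => C * (q1 ^ (m + 1) + q2 ^ (m + 1)) := by
    apply Summable.mul_left
    apply Summable.add
    · simpa [pow_succ] using (summable_geometric_of_lt_one (by positivity) hq1).mul_right q1
    · simpa [pow_succ] using (summable_geometric_of_lt_one (by positivity) hq2).mul_right q2
  exact (Summable.of_nonneg_of_le (fun m => abs_nonneg _) key hsum).of_abs

lemma t_mono (ha : 0 < a) (hab : a < b) {r s : ℝ} (hr : 0 < r) (hrs : r < s) (m : ℕ) :
    t a b r m ≤ t a b s m := by
  have hDpos := denom_pos ha hab m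
  have hrN : 0 < r ^ (2 * (m + 1)) := pow_pos hr _
  have hsN : 0 < s ^ (2 * (m + 1)) := pow_pos (hr.trans hrs) _
  have hKpos : 0 < (a * b) ^ (2 * (m + 1)) := pow_pos (mul_pos ha (ha.trans hab)) _
  have h1 : r ^ (2 * (m + 1)) < s ^ (2 * (m + 1)) := pow_lt_pow_left₀ hrs hr.le (by omega)
  have h2 : (s ^ (2 * (m + 1)))⁻¹ < (r ^ (2 * (m + 1)))⁻¹ := by
    exact inv_strictAnti₀ hrN h1
  have h3 : (a * b) ^ (2 * (m + 1)) * (s ^ (2 * (m + 1)))⁻¹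
      < (a * b) ^ (2 * (m + 1)) * (r ^ (2 * (m + 1)))⁻¹ := by
    exact mul_lt_mul_of_pos_left h2 hKpos
  rw [t, t]
  exact (div_le_div_iff_of_pos_right hDpos).mpr (mul_le_mul_of_nonneg_left (by linarith) (c_nonneg m))


lemma t_strict (ha : 0 < a) (hab : a < b) {r s : ℝ} (hr : 0 < r) (hrs : r < s) :
    t a b r 1 < t a b s 1 := by
  have hDpos := denom_pos ha hab 1
  have hrN : 0 < r ^ (2 * (1 + 1)) := pow_pos hr _
  have hsN : 0 < s ^ (2 * (1 + 1)) := pow_pos (hr.trans hrs) _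
  have hKpos : 0 < (a * b) ^ (2 * (1 + 1)) := pow_pos (mul_pos ha (ha.trans hab)) _
  have h1 : r ^ (2 * (1 + 1)) < s ^ (2 * (1 + 1)) := pow_lt_pow_left₀ hrs hr.le (by omega)
  have h2 : (s ^ (2 * (1 + 1)))⁻¹ < (r ^ (2 * (1 + 1)))⁻¹ := inv_strictAnti₀ hrN h1
  have h3 : (a * b) ^ (2 * (1 + 1)) * (s ^ (2 * (1 + 1)))⁻¹
      < (a * b) ^ (2 * (1 + 1)) * (r ^ (2 * (1 + 1)))⁻¹ := mul_lt_mul_of_pos_left h2 hKpos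
  rw [t, t]
  apply (div_lt_div_iff_of_pos_right hDpos).mpr
  have hc : ((-1 : ℝ) ^ (1 + 1) + 1) = 2 := by norm_num
  rw [hc]
  norm_num at h1 h3 ⊢
  linarith

lemma strictMono (ha : 0 < a) (hab : a < b) : StrictMonoOn (gFun a b) (Set.Ioo a b) := by
  intro r hr s hs hrs
  rw [gFun_eq, gFun_eq]
  exact Summable.tsum_lt_tsum (fun m => t_mono ha hab (ha.trans hr.1) hrs m)
    (t_strict ha hab (ha.trans hr.1) hrs) (t_summable ha hab hr) (t_summable ha hab hs)

lemma sqrt_mem (ha : 0 < a) (hab : a < b) : Real.sqrt (a * b) ∈ Set.Ioo a b := by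
  have hb : 0 < b := ha.trans hab
  constructor
  · have : a = Real.sqrt (a ^ 2) := (Real.sqrt_sq ha.le).symm
    rw [this]
    apply Real.sqrt_lt_sqrt (by positivity)
    nlinarith
  · have : b = Real.sqrt (b ^ 2) := (Real.sqrt_sq hb.le).symm
    rw [this]
    apply Real.sqrt_lt_sqrt (by positivity)
    nlinarith

lemma gFun_sqrt (ha : 0 < a) (hab : a < b) : gFun a b (Real.sqrt (a * b)) = 0 := by
  have hab0 : (0:ℝ) < a * b := mul_pos ha (ha.trans hab)
  rw [gFun_eq]
  have h : ∀ m : ℕ, t a b (Real.sqrt (a * b)) m = 0 := by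
    intro m
    have h1 : Real.sqrt (a * b) ^ (2 * (m + 1)) = (a * b) ^ (m + 1) := by
      rw [pow_mul, Real.sq_sqrt hab0.le]
    have h2 : (a * b) ^ (2 * (m + 1)) = (a * b) ^ (m + 1) * (a * b) ^ (m + 1) := by
      rw [← pow_add]; ring_nf
    rw [t, h1, h2]
    rw [mul_inv_cancel_right₀ (by positivity)]
    simp
  rw [tsum_congr h, tsum_zero]

lemma t_nonpos (ha : 0 < a) (hab : a < b) {r : ℝ} (hr : 0 < r)
    (hrs : r < Real.sqrt (a * b)) (m : ℕ) : t a b r m ≤ 0 := by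
  have hab0 : (0:ℝ) < a * b := mul_pos ha (ha.trans hab)
  have hr2 : r ^ 2 < a * b := (Real.lt_sqrt hr.le).mp hrs
  have hrN : 0 < r ^ (2 * (m + 1)) := pow_pos hr _
  have hX : r ^ (2 * (m + 1)) - (a * b) ^ (2 * (m + 1)) * (r ^ (2 * (m + 1)))⁻¹ ≤ 0 := by
    rw [sub_nonpos, ← div_eq_mul_inv, le_div_iff₀ hrN]
    calc r ^ (2 * (m + 1)) * r ^ (2 * (m + 1)) = (r ^ 2) ^ (2 * (m + 1)) := by ring
      _ ≤ (a * b) ^ (2 * (m + 1)) := pow_le_pow_left₀ (by positivity) hr2.le _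
  rw [t]
  exact div_nonpos_of_nonpos_of_nonneg (mul_nonpos_of_nonneg_of_nonpos (c_nonneg m) hX)
    (denom_pos ha hab m).le

lemma t_nonneg (ha : 0 < a) (hab : a < b) {r : ℝ}
    (hrs : Real.sqrt (a * b) < r) (m : ℕ) : 0 ≤ t a b r m := by
  have hab0 : (0:ℝ) < a * b := mul_pos ha (ha.trans hab)
  have hr : 0 < r := lt_of_le_of_lt (Real.sqrt_nonneg _) hrs
  have hr2 : a * b < r ^ 2 := by
    have := Real.sqrt_lt' hr |>.mp hrs
    exact this
  have hrN : 0 < r ^ (2 * (m + 1)) := pow_pos hr _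
  have hX : 0 ≤ r ^ (2 * (m + 1)) - (a * b) ^ (2 * (m + 1)) * (r ^ (2 * (m + 1)))⁻¹ := by
    rw [sub_nonneg, ← div_eq_mul_inv, div_le_iff₀ hrN]
    calc (a * b) ^ (2 * (m + 1)) ≤ (r ^ 2) ^ (2 * (m + 1)) :=
          pow_le_pow_left₀ hab0.le hr2.le _
      _ = r ^ (2 * (m + 1)) * r ^ (2 * (m + 1)) := by ring
  rw [t]
  exact div_nonneg (mul_nonneg (c_nonneg m) hX) (denom_pos ha hab m).le


lemma t_at_a (ha : 0 < a) (hab : a < b) (m : ℕ) :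
    t a b a m = -((-1 : ℝ) ^ (m + 1) + 1) := by
  have hD : b ^ (2 * (m + 1)) - a ^ (2 * (m + 1)) ≠ 0 := (denom_pos ha hab m).ne'
  have hane : a ^ (2 * (m + 1)) ≠ 0 := (pow_pos ha _).ne'
  rw [t, mul_pow]
  field_simp
  ring

lemma t_at_b (ha : 0 < a) (hab : a < b) (m : ℕ) :
    t a b b m = ((-1 : ℝ) ^ (m + 1) + 1) := by
  have hD : b ^ (2 * (m + 1)) - a ^ (2 * (m + 1)) ≠ 0 := (denom_pos ha hab m).ne'
  have hbne : b ^ (2 * (m + 1)) ≠ 0 := (pow_pos (ha.trans hab) _).ne'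
  rw [t, mul_pow]
  field_simp

lemma sum_c (K : ℕ) :
    ∑ m ∈ Finset.range (2 * K), ((-1 : ℝ) ^ (m + 1) + 1) = 2 * K := by
  induction K with
  | zero => simp
  | succ n ih =>
    rw [show 2 * (n + 1) = (2 * n + 1) + 1 by ring, Finset.sum_range_succ,
      Finset.sum_range_succ, ih]
    have h1 : Odd (2 * n + 1) := odd_two_mul_add_one n
    have h2 : Even (2 * n + 1 + 1) := Nat.even_add_one.mpr (Nat.not_even_iff_odd.mpr h1)
    rw [h1.neg_one_pow, h2.neg_one_pow]
    push_cast
    ring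

lemma tendsto_partial (N : ℕ) {x : ℝ} (hx : x ≠ 0) :
    Tendsto (fun r => ∑ m ∈ Finset.range N, t a b r m) (nhds x)
      (nhds (∑ m ∈ Finset.range N, t a b x m)) := by
  apply tendsto_finset_sum
  intro m _
  have h1 : ContinuousAt (fun r : ℝ => r ^ (2 * (m + 1))) x := (continuous_pow _).continuousAt
  have h2 : ContinuousAt (fun r : ℝ => (r ^ (2 * (m + 1)))⁻¹) x :=
    h1.inv₀ (pow_ne_zero _ hx)
  exact (((continuousAt_const.mul (h1.sub (continuousAt_const.mul h2))).div_const _)).tendsto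

lemma tendsto_bot (ha : 0 < a) (hab : a < b) :
    Tendsto (gFun a b) (nhdsWithin a (Set.Ioi a)) atBot := by
  rw [tendsto_atBot]
  intro M
  obtain ⟨K, hK⟩ := exists_nat_gt ((1 - M) / 2)
  have hPa : ∑ m ∈ Finset.range (2 * K), t a b a m = -(2 * K) := by
    have : ∀ m ∈ Finset.range (2 * K), t a b a m = -((-1 : ℝ) ^ (m + 1) + 1) :=
      fun m _ => t_at_a ha hab m
    rw [Finset.sum_congr rfl this, Finset.sum_neg_distrib, sum_c]
  have hlim : Tendsto (fun r => ∑ m ∈ Finset.range (2 * K), t a b r m)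
      (nhdsWithin a (Set.Ioi a)) (nhds (-(2 * K))) := by
    rw [← hPa]
    exact (tendsto_partial (2 * K) ha.ne').mono_left nhdsWithin_le_nhds
  have hev1 : ∀ᶠ r in nhdsWithin a (Set.Ioi a),
      (∑ m ∈ Finset.range (2 * K), t a b r m) < M :=
    hlim.eventually_lt_const (by push_cast; linarith)
  filter_upwards [hev1, Ioo_mem_nhdsGT (sqrt_mem ha hab).1] with r h1 h2
  have hrIoo : r ∈ Set.Ioo a b := ⟨h2.1, h2.2.trans (sqrt_mem ha hab).2⟩
  have hsumm := t_summable ha hab hrIoo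
  have hle : gFun a b r ≤ ∑ m ∈ Finset.range (2 * K), t a b r m := by
    rw [gFun_eq]
    have h := Summable.sum_le_tsum (Finset.range (2 * K))
      (fun i _ => neg_nonneg.mpr (t_nonpos ha hab (ha.trans h2.1) h2.2 i)) hsumm.neg
    rw [tsum_neg, Finset.sum_neg_distrib] at h
    linarith
  linarith

lemma tendsto_top (ha : 0 < a) (hab : a < b) :
    Tendsto (gFun a b) (nhdsWithin b (Set.Iio b)) atTop := by
  rw [tendsto_atTop]
  intro M
  obtain ⟨K, hK⟩ := exists_nat_gt ((M + 1) / 2)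
  have hPb : ∑ m ∈ Finset.range (2 * K), t a b b m = 2 * K := by
    have : ∀ m ∈ Finset.range (2 * K), t a b b m = ((-1 : ℝ) ^ (m + 1) + 1) :=
      fun m _ => t_at_b ha hab m
    rw [Finset.sum_congr rfl this, sum_c]
  have hlim : Tendsto (fun r => ∑ m ∈ Finset.range (2 * K), t a b r m)
      (nhdsWithin b (Set.Iio b)) (nhds (2 * K)) := by
    rw [← hPb]
    exact (tendsto_partial (2 * K) (ha.trans hab).ne').mono_left nhdsWithin_le_nhds
  have hev1 : ∀ᶠ r in nhdsWithin b (Set.Iio b),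
      M < ∑ m ∈ Finset.range (2 * K), t a b r m :=
    hlim.eventually_const_lt (by push_cast; linarith)
  filter_upwards [hev1, Ioo_mem_nhdsLT (sqrt_mem ha hab).2] with r h1 h2
  have hrIoo : r ∈ Set.Ioo a b := ⟨(sqrt_mem ha hab).1.trans h2.1, h2.2⟩
  have hsumm := t_summable ha hab hrIoo
  have hle : ∑ m ∈ Finset.range (2 * K), t a b r m ≤ gFun a b r := by
    rw [gFun_eq]
    exact Summable.sum_le_tsum (Finset.range (2 * K))
      (fun i _ => t_nonneg ha hab h2.1 i) hsumm
  linarith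

end GAux

theorem gFun_properties (a b : ℝ) (ha : 0 < a) (hab : a < b) :
    (∀ r ∈ Set.Ioo a b, Summable (fun m : ℕ => ((-1 : ℝ) ^ (m + 1) + 1) *
      (r ^ (2 * (m + 1)) - (a * b) ^ (2 * (m + 1)) * (r ^ (2 * (m + 1)))⁻¹) /
      (b ^ (2 * (m + 1)) - a ^ (2 * (m + 1))))) ∧
    StrictMonoOn (gFun a b) (Set.Ioo a b) ∧
    Tendsto (gFun a b) (nhdsWithin a (Set.Ioi a)) atBot ∧
    Tendsto (gFun a b) (nhdsWithin b (Set.Iio b)) atTop ∧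
    ∀ r ∈ Set.Ioo a b, (gFun a b r = 0 ↔ r = Real.sqrt (a * b)) := by
  refine ⟨fun r hr => GAux.t_summable ha hab hr, GAux.strictMono ha hab,
    GAux.tendsto_bot ha hab, GAux.tendsto_top ha hab, fun r hr => ?_⟩
  constructor
  · intro h
    exact (GAux.strictMono ha hab).injOn hr (GAux.sqrt_mem ha hab)
      (h.trans (GAux.gFun_sqrt ha hab).symm)
  · rintro rfl
    exact GAux.gFun_sqrt ha hab
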